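/- Let m > k ≥ 1 be integers and suppose that no Sauer Matrix of size k is feasible for translations, i.e., for every Sauer Matrix S of size k there is no r ∈ [0,1)^k such that r+S is totally 1-submodular. Then for every t ∈ [0,1)^m \ {0} and every A ∈ {-1,0,1}^{m×n} with pairwise distinct columns such that t+A is totally 1-submodular, one has n ≤ 2·(C(m,0)+C(m,1)+…+C(m,k−1)); that is, h_s(m) ≤ 2·Σ_{i=0}^{k−1} C(m,i). -/

import Mathlib

open Matrix

/-- Every `k×k` minor of `A` is at most `c` in absolute value. -/
def MinorsLE {m n : ℕ} (k : ℕ) (A : Matrix (Fin m) (Fin n) ℝ) (c : ℝ) : Prop :=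
  ∀ (f : Fin k ↪ Fin m) (g : Fin k ↪ Fin n), |(A.submatrix f g).det| ≤ c

/-- `A` is totally 1-submodular: all its minors, of any size, are at most `1`
in absolute value. -/
def Totally1Submodular {m n : ℕ} (A : Matrix (Fin m) (Fin n) ℝ) : Prop :=
  ∀ k : ℕ, MinorsLE k A 1

/-- The shifted matrix `t + A`, whose columns are `t + A_j`. -/
def shiftMat {m n : ℕ} (t : Fin m → ℝ) (A : Matrix (Fin m) (Fin n) ℝ) :
    Matrix (Fin m) (Fin n) ℝ :=
  Matrix.of fun i j => t i + A i j

/-- All entries of `A` lie in `{-1, 0, 1}`. -/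
def SignEntries {m n : ℕ} (A : Matrix (Fin m) (Fin n) ℝ) : Prop :=
  ∀ i j, A i j = -1 ∨ A i j = 0 ∨ A i j = 1

/-- The data admissible for the shifted Heller constant `h_s(m)`: a translation vector
`t ∈ [0,1)^m \ {0}` and a matrix `A ∈ {-1,0,1}^{m×n}` with pairwise distinct columns
such that `t + A` is totally 1-submodular. -/
def ShiftedAdmissible (m n : ℕ) (t : Fin m → ℝ) (A : Matrix (Fin m) (Fin n) ℝ) : Prop :=
  (∀ i, 0 ≤ t i ∧ t i < 1) ∧ t ≠ 0 ∧ SignEntries A ∧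
    Function.Injective A.transpose ∧ Totally1Submodular (shiftMat t A)

/-- A Sauer Matrix of size `k`: a `{-1,0,1}`-matrix of format `k × 2^k` having, for each
subset `E ⊆ {1,…,k}`, exactly one column whose support equals `E`. -/
def IsSauer {k : ℕ} (S : Matrix (Fin k) (Fin (2 ^ k)) ℝ) : Prop :=
  SignEntries S ∧ ∀ E : Set (Fin k), ∃! j : Fin (2 ^ k), ∀ i, S i j ≠ 0 ↔ i ∈ E

lemma minor1 {m n : ℕ} {B : Matrix (Fin m) (Fin n) ℝ} (h : Totally1Submodular B)
    (i : Fin m) (j : Fin n) : |B i j| ≤ 1 := by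
  have := h 1 ⟨fun _ => i, fun a b _ => Subsingleton.elim a b⟩
    ⟨fun _ => j, fun a b _ => Subsingleton.elim a b⟩
  simp only [Matrix.det_fin_one, Matrix.submatrix_apply] at this
  exact this

lemma minor2 {m n : ℕ} {B : Matrix (Fin m) (Fin n) ℝ} (h : Totally1Submodular B)
    {i i' : Fin m} {j j' : Fin n} (hi : i ≠ i') (hj : j ≠ j') :
    |B i j * B i' j' - B i j' * B i' j| ≤ 1 := by
  have hf : Function.Injective ![i, i'] := by
    intro a b hab
    fin_cases a <;> fin_cases b <;> simp_all
  have hg : Function.Injective ![j, j'] := by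
    intro a b hab
    fin_cases a <;> fin_cases b <;> simp_all
  have := h 2 ⟨![i, i'], hf⟩ ⟨![j, j'], hg⟩
  rw [Matrix.det_fin_two] at this
  simpa [Function.Embedding.coeFn_mk] using this

theorem stmt11 (m k : ℕ) (hk : 1 ≤ k) (hmk : k < m)
    (hSauer : ∀ S : Matrix (Fin k) (Fin (2 ^ k)) ℝ, IsSauer S →
      ∀ r : Fin k → ℝ, (∀ i, 0 ≤ r i ∧ r i < 1) → ¬ Totally1Submodular (shiftMat r S))
    (n : ℕ) (t : Fin m → ℝ) (A : Matrix (Fin m) (Fin n) ℝ)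
    (hadm : ShiftedAdmissible m n t A) :
    n ≤ 2 * ∑ i ∈ Finset.range k, m.choose i := by
  classical
  obtain ⟨ht, -, hsign, hinj, hT⟩ := hadm
  have hno1 : ∀ i j, t i ≠ 0 → A i j ≠ 1 := by
    intro i j hti h1
    have h2 := minor1 hT i j
    simp only [shiftMat, Matrix.of_apply, h1] at h2
    rw [abs_le] at h2
    have h0 := (ht i).1
    exact hti (le_antisymm (by linarith [h2.2]) h0)
  set supp : Fin n → Finset (Fin m) := fun j => Finset.univ.filter (fun i => A i j ≠ 0)
    with hsupp
  have hmemsupp : ∀ i j, i ∈ supp j ↔ A i j ≠ 0 := by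
    intro i j; simp [hsupp]
  have hdet : ∀ i j, t i ≠ 0 → A i j = if i ∈ supp j then -1 else 0 := by
    intro i j hti
    by_cases hmem : i ∈ supp j
    · rw [if_pos hmem]
      rcases hsign i j with h | h | h
      · exact h
      · exact absurd h ((hmemsupp i j).1 hmem)
      · exact absurd h (hno1 i j hti)
    · rw [if_neg hmem]
      by_contra h
      exact hmem ((hmemsupp i j).2 h)
  have hcol : ∀ j j' : Fin n, (∀ i, A i j = A i j') → j = j' :=
    fun j j' h => hinj (funext fun i => h i)
  -- antipodality of two distinct columns with the same support on rows with t i = 0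
  have hanti : ∀ j j' : Fin n, j ≠ j' → supp j = supp j' →
      ∀ i, t i = 0 → A i j' = -A i j := by
    intro j j' hjj' hse
    have hz : ∀ a, A a j = 0 ↔ A a j' = 0 := by
      intro a
      have hmm : (A a j ≠ 0) ↔ (A a j' ≠ 0) := by
        rw [← hmemsupp a j, ← hmemsupp a j', hse]
      exact not_iff_not.mp hmm
    have key : ∀ a, A a j ≠ A a j' → A a j' = -A a j := by
      intro a hne
      have hza := hz a
      rcases hsign a j with h1 | h1 | h1 <;> rcases hsign a j' with h2 | h2 | h2 <;>
          rw [h1, h2] at hne hza ⊢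
      · exact absurd rfl hne
      · exact absurd (hza.mpr rfl) (by norm_num)
      · norm_num
      · exact absurd (hza.mp rfl) (by norm_num)
      · exact absurd rfl hne
      · exact absurd (hza.mp rfl) (by norm_num)
      · exact absurd (hza.mpr rfl) (by norm_num)
      · exact absurd rfl hne
    have hdiff : ∃ i₀, A i₀ j ≠ A i₀ j' := by
      by_contra h; push_neg at h; exact hjj' (hcol _ _ h)
    obtain ⟨i₀, hi₀⟩ := hdiff
    have hti₀ : t i₀ = 0 := by
      by_contra h
      rw [hdet i₀ j h, hdet i₀ j' h, hse] at hi₀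
      exact hi₀ rfl
    intro i hti
    by_cases hne : A i j = A i j'
    · -- must have A i j = 0
      by_cases h0 : A i j = 0
      · rw [← hne, h0]; ring
      · exfalso
        have hii₀ : i₀ ≠ i := fun h => hi₀ (h ▸ hne)
        have h2 := minor2 hT hii₀ hjj'
        simp only [shiftMat, Matrix.of_apply, hti, hti₀, zero_add] at h2
        have e1 : A i₀ j' = -A i₀ j := key i₀ hi₀
        have hj₀0 : A i₀ j ≠ 0 := by
          intro h; rw [h] at e1; rw [h, (hz i₀).1 h] at hi₀; exact hi₀ rfl
        have habs1 : |A i₀ j| = 1 := by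
          rcases hsign i₀ j with h | h | h <;> rw [h] <;> norm_num
          exact absurd h hj₀0
        have habs2 : |A i j| = 1 := by
          rcases hsign i j with h | h | h <;> rw [h] <;> norm_num
          exact absurd h h0
        rw [e1, ← hne] at h2
        have : A i₀ j * A i j - -A i₀ j * A i j = 2 * (A i₀ j * A i j) := by ring
        rw [this, abs_mul, abs_mul, habs1, habs2] at h2
        norm_num at h2
    · exact key i hne
  set 𝒜 : Finset (Finset (Fin m)) := Finset.univ.image supp with h𝒜
  -- fibers of supp have at most 2 elements
  have hfib : ∀ F ∈ 𝒜, ((Finset.univ : Finset (Fin n)).filter (fun j => supp j = F)).card ≤ 2 := by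
    intro F _
    by_contra h
    push_neg at h
    rw [Finset.two_lt_card] at h
    obtain ⟨a, ha, b, hb, c, hc, hab, hac, hbc⟩ := h
    simp only [Finset.mem_filter] at ha hb hc
    apply hbc
    apply hcol
    intro i
    by_cases hti : t i = 0
    · rw [hanti a b hab (ha.2.trans hb.2.symm) i hti,
        hanti a c hac (ha.2.trans hc.2.symm) i hti]
    · rw [hdet i b hti, hdet i c hti, hb.2, hc.2]
  have hn2 : n ≤ 2 * 𝒜.card := by
    have := Finset.card_le_mul_card_image (f := supp) (Finset.univ : Finset (Fin n)) 2 hfib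
    simpa using this
  -- no k-set is shattered
  have hshatters : ∀ s : Finset (Fin m), s.card = k → ¬ 𝒜.Shatters s := by
    intro s hs hsh
    set ι := s.orderEmbOfFin hs with hι
    have hιs : ∀ i, ι i ∈ s := fun i => s.orderEmbOfFin_mem hs i
    have hchoose : ∀ E : Finset (Fin k), ∃ j : Fin n,
        s ∩ supp j = E.map ι.toEmbedding := by
      intro E
      have hE : E.map ι.toEmbedding ⊆ s := by
        intro x hx
        simp only [Finset.mem_map] at hx
        obtain ⟨y, -, rfl⟩ := hx
        exact hιs y
      obtain ⟨u, hu, hsu⟩ := hsh hE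
      rw [h𝒜, Finset.mem_image] at hu
      obtain ⟨j, -, rfl⟩ := hu
      exact ⟨j, hsu⟩
    choose c hc using hchoose
    have hcard : Fintype.card (Finset (Fin k)) = 2 ^ k := by simp
    set e : Fin (2 ^ k) ≃ Finset (Fin k) := (Fintype.equivFinOfCardEq hcard).symm with he
    set S : Matrix (Fin k) (Fin (2 ^ k)) ℝ := Matrix.of fun i j => A (ι i) (c (e j)) with hS
    have hSsupp : ∀ i j, S i j ≠ 0 ↔ i ∈ e j := by
      intro i j
      have h1 : (S i j ≠ 0) ↔ ι i ∈ supp (c (e j)) := by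
        rw [hmemsupp]
        simp [hS]
      rw [h1]
      constructor
      · intro hmem
        have h3 : ι i ∈ s ∩ supp (c (e j)) := Finset.mem_inter.2 ⟨hιs i, hmem⟩
        rw [hc] at h3
        exact (Finset.mem_map' _).1 h3
      · intro hmem
        have h3 : ι i ∈ (e j).map ι.toEmbedding := Finset.mem_map_of_mem _ hmem
        rw [← hc] at h3
        exact (Finset.mem_inter.1 h3).2
    have hSsauer : IsSauer S := by
      constructor
      · intro i j
        exact hsign _ _
      · intro E
        refine ⟨e.symm (Finset.univ.filter (· ∈ E)), fun i => ?_, fun j' hj' => ?_⟩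
        · rw [hSsupp, Equiv.apply_symm_apply]
          simp
        · have hEj : e j' = Finset.univ.filter (· ∈ E) := by
            ext i
            rw [← hSsupp, hj' i]
            simp
          rw [← hEj, Equiv.symm_apply_apply]
    have hcinj : Function.Injective c := by
      intro E E' hEE'
      have h4 : E.map ι.toEmbedding = E'.map ι.toEmbedding := by
        rw [← hc, ← hc, hEE']
      exact Finset.map_injective ι.toEmbedding h4
    refine hSauer S hSsauer (fun i => t (ι i)) (fun i => ht (ι i)) ?_
    intro k' f g
    have heq : (shiftMat (fun i => t (ι i)) S).submatrix f g
        = (shiftMat t A).submatrix (f.trans ι.toEmbedding)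
            (g.trans ⟨fun j => c (e j), hcinj.comp e.injective⟩) := rfl
    rw [heq]
    exact hT k' _ _
  have hsub : 𝒜.shatterer ⊆ (Finset.range k).biUnion
      (fun i => Finset.powersetCard i Finset.univ) := by
    intro s hs
    rw [Finset.mem_shatterer] at hs
    have hlt : s.card < k := by
      by_contra hle
      push_neg at hle
      obtain ⟨u, hus, huc⟩ := Finset.exists_subset_card_eq hle
      exact hshatters u huc (hs.mono_right hus)
    rw [Finset.mem_biUnion]
    exact ⟨s.card, Finset.mem_range.2 hlt,
      Finset.mem_powersetCard.2 ⟨Finset.subset_univ _, rfl⟩⟩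
  have hA2 : 𝒜.card ≤ ∑ i ∈ Finset.range k, m.choose i := by
    calc 𝒜.card ≤ 𝒜.shatterer.card := Finset.card_le_card_shatterer 𝒜
      _ ≤ ((Finset.range k).biUnion (fun i => Finset.powersetCard i Finset.univ)).card :=
          Finset.card_le_card hsub
      _ ≤ ∑ i ∈ Finset.range k,
            (Finset.powersetCard i (Finset.univ : Finset (Fin m))).card :=
          Finset.card_biUnion_le
      _ = ∑ i ∈ Finset.range k, m.choose i := by
          refine Finset.sum_congr rfl fun i _ => ?_
          rw [Finset.card_powersetCard, Finset.card_univ, Fintype.card_fin]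
  exact le_trans hn2 (Nat.mul_le_mul_left 2 hA2)
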